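/- For any ᾱ ∈ [0,1], n ≥ 1, L ≥ 0, and 0 ≤ h̄ < h with L + h̄ > 0, the ratio of optimal-ordering capacity to worst-case Bernoulli capacity satisfies n·c^UB(ᾱ) / (n·c(ᾱ)) ≤ 2·(L + h - √((L+h)(L+h̄))) / (h - h̄). -/

import Mathlib

/-- Price of negligence bound: the ratio of the optimally ordered capacity to
the worst-case Bernoulli capacity is at most
`2(L + h - √((L+h)(L+h̄)))/(h - h̄)`. -/
theorem price_of_negligence_bound
    (n : ℕ) (hn : 1 ≤ n) (abar d L h hb : ℝ)
    (habar : abar ∈ Set.Icc (0 : ℝ) 1)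
    (hd : 0 < d) (hL : 0 ≤ L) (hhb : 0 ≤ hb) (hbh : hb < h) (hLhb : 0 < L + hb)
    (c cUB : ℝ → ℝ)
    (hc : ∀ α, c α = d / (L + α ^ 2 * hb + (1 - α ^ 2) * h))
    (hcUB : ∀ α, cUB α = d / (L + α * hb + (1 - α) * h)) :
    (n : ℝ) * cUB abar / ((n : ℝ) * c abar) ≤
      2 * (L + h - Real.sqrt ((L + h) * (L + hb))) / (h - hb) := by
  obtain ⟨ha0, ha1⟩ := habar
  rw [hc, hcUB]
  have hΔ : 0 < h - hb := by linarith
  have ha2 : abar ^ 2 ≤ 1 := by nlinarith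
  have hDc : 0 < L + abar ^ 2 * hb + (1 - abar ^ 2) * h := by
    nlinarith [mul_nonneg (by linarith : (0:ℝ) ≤ 1 - abar ^ 2) hΔ.le,
      mul_nonneg (sq_nonneg abar) hhb]
  have hDu : 0 < L + abar * hb + (1 - abar) * h := by nlinarith
  have hn' : (0 : ℝ) < n := by exact_mod_cast hn
  set s := Real.sqrt ((L + h) * (L + hb)) with hsdef
  have hs : s ^ 2 = (L + h) * (L + hb) := Real.sq_sqrt (by nlinarith)
  have hsnn : 0 ≤ s := Real.sqrt_nonneg _
  have hLHS : (n : ℝ) * (d / (L + abar * hb + (1 - abar) * h)) /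
      ((n : ℝ) * (d / (L + abar ^ 2 * hb + (1 - abar ^ 2) * h))) =
      (L + abar ^ 2 * hb + (1 - abar ^ 2) * h) / (L + abar * hb + (1 - abar) * h) := by
    field_simp
  rw [hLHS, div_le_div_iff₀ hDu hΔ]
  nlinarith [sq_nonneg (L + abar * hb + (1 - abar) * h - s), hs, hsnn,
    mul_nonneg hsnn hΔ.le]
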